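/- Let G be a d-regular graph (d ≥ 3) with girth c, and S ≥ 0 with 2S+1 < c. For any nonempty U ⊆ B(v,S) (for some vertex v), the isoperimetric number satisfies |∂U|/|U| ≥ d − 2 + 2(2−d)/(2 − d(d−1)^S), i.e., the Cheeger constant of G at scale S equals (d−2)·d·(d−1)^S/(d(d−1)^S − 2). -/

import Mathlib

open scoped Classical

namespace SimpleGraph
variable {V : Type*} [DecidableEq V] {G : SimpleGraph V}
variable {V : Type*} [DecidableEq V] {G : SimpleGraph V}

/-- Two distinct paths with the same endpoints yield a cycle of length at most the
sum of the lengths. -/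
lemma exists_cycle_of_two_paths {u x : V} (p : G.Walk u x) :
    ∀ q : G.Walk u x, p.IsPath → q.IsPath → p ≠ q →
      ∃ (z : V) (c : G.Walk z z), c.IsCycle ∧ c.length ≤ p.length + q.length := by
  induction p with
  | nil =>
    intro q _ hq hne
    exact absurd (Walk.isPath_iff_eq_nil.mp hq).symm hne
  | @cons u a x h₁ p' ih =>
    intro q hp hq hne
    rw [Walk.cons_isPath_iff] at hp
    by_cases hmem : s(u, a) ∈ q.edges
    · -- first edge of q must be s(u,a)
      cases q with
      | nil => simp at hmem
      | @cons _ b _ h₂ q' =>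
        rw [Walk.edges_cons, List.mem_cons] at hmem
        rcases hmem with heq | hmem'
        · rw [Sym2.eq_iff] at heq
          rcases heq with ⟨-, rfl⟩ | ⟨h1, rfl⟩
          · have hq' := ((Walk.cons_isPath_iff _ _).mp hq).1
            have hne' : p' ≠ q' := by rintro rfl; exact hne rfl
            obtain ⟨z, c, hc, hlen⟩ := ih q' hp.1 hq' hne'
            exact ⟨z, c, hc, by simp only [Walk.length_cons]; omega⟩
          · exact absurd h1 h₂.ne
        · exact absurd (Walk.fst_mem_support_of_mem_edges q' hmem')
            ((Walk.cons_isPath_iff _ _).mp hq).2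
    · -- use the walk q ++ p'.reverse from u to a, bypass to a path
      set r : G.Walk u a := (q.append p'.reverse).bypass with hr
      have hrpath : r.IsPath := Walk.bypass_isPath _
      have hredge : s(u, a) ∉ r.edges := by
        intro hmem2
        have := Walk.edges_bypass_subset _ hmem2
        rw [Walk.edges_append, List.mem_append] at this
        rcases this with h | h
        · exact hmem h
        · rw [Walk.edges_reverse, List.mem_reverse] at h
          exact hp.2 (Walk.fst_mem_support_of_mem_edges p' h)
      have hcyc : (Walk.cons h₁ r.reverse).IsCycle := by
        rw [Walk.cons_isCycle_iff]
        refine ⟨hrpath.reverse, ?_⟩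
        rw [Walk.edges_reverse, List.mem_reverse]
        exact hredge
      refine ⟨u, Walk.cons h₁ r.reverse, hcyc, ?_⟩
      have h1 : r.length ≤ q.length + p'.length := by
        have := Walk.length_bypass_le (q.append p'.reverse)
        rwa [Walk.length_append, Walk.length_reverse] at this
      simp only [Walk.length_cons, Walk.length_reverse]
      omega

lemma egirth_le_of_two_paths {u x : V} {p q : G.Walk u x} (hp : p.IsPath) (hq : q.IsPath)
    (hne : p ≠ q) : G.egirth ≤ (p.length + q.length : ℕ) := by
  obtain ⟨z, c, hc, hlen⟩ := exists_cycle_of_two_paths p q hp hq hne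
  calc G.egirth ≤ c.length := by
        rw [egirth]; exact iInf_le_of_le z (iInf_le_of_le c (iInf_le_of_le hc le_rfl))
    _ ≤ _ := by exact_mod_cast Nat.cast_le.mpr hlen


lemma IsPath.concat' {u x y : V} {p : G.Walk u y} (hp : p.IsPath) (h : G.Adj y x)
    (hx : x ∉ p.support) : (p.concat h).IsPath := by
  rw [← Walk.isPath_reverse_iff, Walk.reverse_concat]
  rw [Walk.cons_isPath_iff]
  refine ⟨hp.reverse, ?_⟩
  rwa [Walk.support_reverse, List.mem_reverse]

section Struct
variable {S : ℕ} {v : V}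

/-- Walk-splitting: a vertex on a walk splits lengths. -/
lemma dist_add_dist_le_of_mem_support {x z : V} {p : G.Walk v x} (hz : z ∈ p.support) :
    G.dist v z + G.dist z x ≤ p.length := by
  have hspec := p.take_spec hz
  have := congrArg Walk.length hspec
  rw [Walk.length_append] at this
  have h1 := G.dist_le (p.takeUntil z hz)
  have h2 := G.dist_le (p.dropUntil z hz)
  omega

/-- Adjacent vertices have distances (from `v`) differing by at most one. -/
lemma dist_le_dist_add_one {x y : V} (hxy : G.Adj x y) (hx : G.Reachable v x) :
    G.dist v y ≤ G.dist v x + 1 := by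
  obtain ⟨p, hp, hlen⟩ := hx.exists_path_of_dist
  have := G.dist_le (p.concat hxy)
  rwa [Walk.length_concat, hlen] at this

variable (hegirth : (2 * S + 1 : ℕ∞) < G.egirth)
include hegirth

lemma paths_eq_of_short {x : V} {p q : G.Walk v x} (hp : p.IsPath) (hq : q.IsPath)
    (hlen : p.length + q.length ≤ 2 * S + 1) : p = q := by
  by_contra hne
  have := egirth_le_of_two_paths hp hq hne
  have h2 : ((p.length + q.length : ℕ) : ℕ∞) ≤ ((2 * S + 1 : ℕ) : ℕ∞) := by
    exact_mod_cast Nat.cast_le.mpr hlen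
  exact absurd (le_trans this h2) (not_le.mpr (by exact_mod_cast hegirth))

/-- No edges within a sphere of radius at most `S`. -/
lemma no_same_level_edge {x y : V} (hxy : G.Adj x y) (hx : G.Reachable v x)
    (hy : G.Reachable v y) (hdist : G.dist v x = G.dist v y) (hle : G.dist v x ≤ S) :
    False := by
  obtain ⟨p, hp, hplen⟩ := hx.exists_path_of_dist
  obtain ⟨q, hq, hqlen⟩ := hy.exists_path_of_dist
  -- x is not on q
  have hxq : x ∉ q.support := by
    intro hmem
    have := dist_add_dist_le_of_mem_support (G := G) hmem
    rw [hqlen, ← hdist] at this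
    have hxyne : x ≠ y := hxy.ne
    have h0 : G.dist x y = 0 := by omega
    exact hxyne ((hxy.reachable).dist_eq_zero_iff.mp h0)
  set q' : G.Walk v x := q.concat hxy.symm with hq'
  have hq'path : q'.IsPath := IsPath.concat' hq hxy.symm hxq
  have hne : p ≠ q' := by
    intro h
    have := congrArg Walk.length h
    rw [Walk.length_concat, hplen, hqlen, hdist] at this
    omega
  apply hne
  apply paths_eq_of_short hegirth hp hq'path
  rw [Walk.length_concat, hplen, hqlen, hdist]
  omega

/-- Uniqueness of the parent. -/
lemma parent_unique {x y₁ y₂ : V} (h₁ : G.Adj y₁ x) (h₂ : G.Adj y₂ x)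
    (hy₁ : G.Reachable v y₁) (hy₂ : G.Reachable v y₂)
    (hd₁ : G.dist v y₁ + 1 = G.dist v x) (hd₂ : G.dist v y₂ + 1 = G.dist v x)
    (hle : G.dist v x ≤ S) : y₁ = y₂ := by
  by_contra hne
  obtain ⟨p₁, hp₁, hl₁⟩ := hy₁.exists_path_of_dist
  obtain ⟨p₂, hp₂, hl₂⟩ := hy₂.exists_path_of_dist
  have hxs : ∀ (y : V) (q : G.Walk v y), q.IsPath → q.length = G.dist v y →
      G.dist v y + 1 = G.dist v x → x ∉ q.support := by
    intro y q hq hql hqd hmem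
    have := dist_add_dist_le_of_mem_support (G := G) hmem
    omega
  set w₁ : G.Walk v x := p₁.concat h₁ with hw₁
  set w₂ : G.Walk v x := p₂.concat h₂ with hw₂
  have hw₁p : w₁.IsPath := IsPath.concat' hp₁ h₁ (hxs y₁ p₁ hp₁ hl₁ hd₁)
  have hw₂p : w₂.IsPath := IsPath.concat' hp₂ h₂ (hxs y₂ p₂ hp₂ hl₂ hd₂)
  have hwne : w₁ ≠ w₂ := by
    intro h
    have hmem : s(y₁, x) ∈ w₂.edges := by
      rw [← h, hw₁, Walk.edges_concat, List.concat_eq_append]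
      exact List.mem_concat_self
    rw [hw₂, Walk.edges_concat, List.concat_eq_append, List.mem_append] at hmem
    simp only [List.mem_singleton] at hmem
    rcases hmem with hmem | hmem
    · exact (hxs y₂ p₂ hp₂ hl₂ hd₂) (Walk.snd_mem_support_of_mem_edges p₂ hmem)
    · rw [Sym2.eq_iff] at hmem
      rcases hmem with ⟨h1, -⟩ | ⟨h1, h2⟩
      · exact hne h1
      · exact h₁.ne h1
  apply hwne
  apply paths_eq_of_short hegirth hw₁p hw₂p
  rw [hw₁, hw₂, Walk.length_concat, Walk.length_concat, hl₁, hl₂]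
  omega

omit hegirth

/-- Existence of a parent. -/
lemma parent_exists {x : V} (hx : G.Reachable v x) (hpos : 0 < G.dist v x) :
    ∃ y, G.Adj y x ∧ G.Reachable v y ∧ G.dist v y + 1 = G.dist v x := by
  obtain ⟨p, hp, hlen⟩ := hx.exists_path_of_dist
  have hne : x ≠ v := by
    rintro rfl
    rw [G.dist_self] at hpos
    omega
  obtain ⟨y, h, q, hq⟩ := p.reverse.exists_eq_cons_of_ne hne
  have hql : q.length + 1 = G.dist v x := by
    have := congrArg Walk.length hq
    rw [Walk.length_reverse, Walk.length_cons, hlen] at this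
    omega
  refine ⟨y, h.symm, ⟨q.reverse⟩, ?_⟩
  have h1 : G.dist v y ≤ q.length := by
    have := G.dist_le q.reverse
    rwa [Walk.length_reverse] at this
  have h2 : G.dist v x ≤ G.dist v y + 1 := dist_le_dist_add_one h.symm ⟨q.reverse⟩
  omega

end Struct

open Finset


section Count
variable [Fintype V] [DecidableRel G.Adj] {d S : ℕ} {v : V}

/-- A choice of parent. -/
noncomputable def pa (G : SimpleGraph V) (v : V) : V → V := fun x =>
  if h : ∃ y, G.Adj y x ∧ G.Reachable v y ∧ G.dist v y + 1 = G.dist v x then h.choose else x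

lemma pa_spec {x : V} (hx : G.Reachable v x) (hpos : 0 < G.dist v x) :
    G.Adj (pa G v x) x ∧ G.Reachable v (pa G v x) ∧ G.dist v (pa G v x) + 1 = G.dist v x := by
  have h : ∃ y, G.Adj y x ∧ G.Reachable v y ∧ G.dist v y + 1 = G.dist v x :=
    parent_exists hx hpos
  rw [pa, dif_pos h]
  exact h.choose_spec

variable (hegirth : (2 * S + 1 : ℕ∞) < G.egirth) (hreg : G.IsRegularOfDegree d)
include hegirth hreg

/-- Neighbor partition: a vertex at level `1 ≤ t ≤ S` has `d - 1` neighbors at level `t+1`. -/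
lemma children_card {x : V} (hx : G.Reachable v x) (hpos : 0 < G.dist v x)
    (hle : G.dist v x ≤ S) :
    ((G.neighborFinset x).filter fun u => G.dist v u = G.dist v x + 1).card = d - 1 := by
  obtain ⟨hadj, hreach, hdist⟩ := pa_spec hx hpos
  have hmem : pa G v x ∈ G.neighborFinset x := by
    rw [mem_neighborFinset]; exact hadj.symm
  have hfe : ((G.neighborFinset x).filter fun u => G.dist v u = G.dist v x + 1)
      = (G.neighborFinset x).erase (pa G v x) := by
    ext u
    simp only [mem_filter, mem_erase, mem_neighborFinset]
    constructor
    · rintro ⟨hu, hd⟩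
      exact ⟨fun h => by rw [h] at hd; omega, hu⟩
    · rintro ⟨hne, hu⟩
      have hru : G.Reachable v u := hx.trans hu.reachable
      have h1 : G.dist v u ≤ G.dist v x + 1 := dist_le_dist_add_one hu hx
      have h2 : G.dist v x ≤ G.dist v u + 1 := dist_le_dist_add_one hu.symm hru
      refine ⟨hu, ?_⟩
      have hnt : G.dist v u ≠ G.dist v x := fun h =>
        no_same_level_edge hegirth hu hx hru h.symm hle
      have hnp : G.dist v u ≠ G.dist v x - 1 := by
        intro h
        exact hne (parent_unique hegirth hu.symm hadj hru hreach (by omega) hdist (by omega))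
      omega
  rw [hfe, card_erase_of_mem hmem, ← hreg x, degree]

/-- Level sets. -/
lemma level_card (hd : 3 ≤ d) :
    ∀ t, 1 ≤ t → t ≤ S →
      (univ.filter fun u => G.Reachable v u ∧ G.dist v u = t).card = d * (d - 1) ^ (t - 1) := by
  intro t
  induction t with
  | zero => omega
  | succ t ih =>
    intro h1 hle
    rcases Nat.eq_or_lt_of_le h1 with h1' | h1'
    · -- t + 1 = 1
      have ht0 : t = 0 := by omega
      subst ht0
      have : (univ.filter fun u => G.Reachable v u ∧ G.dist v u = 1) = G.neighborFinset v := by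
        ext u
        simp only [mem_filter, mem_univ, true_and, mem_neighborFinset, ← G.dist_eq_one_iff_adj]
        exact ⟨fun h => h.2, fun h => ⟨Reachable.of_dist_ne_zero (by omega), h⟩⟩
      rw [this, show d * (d - 1) ^ (1 - 1) = d by simp]
      exact hreg v
    · -- t ≥ 1
      have ht1 : 1 ≤ t := by omega
      have htS : t ≤ S := by omega
      set Lt := univ.filter fun u => G.Reachable v u ∧ G.dist v u = t with hLt
      set Lt1 := univ.filter fun u => G.Reachable v u ∧ G.dist v u = t + 1 with hLt1
      have hmap : ∀ u ∈ Lt1, pa G v u ∈ Lt := by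
        intro u hu
        rw [hLt1, mem_filter] at hu
        obtain ⟨hadj, hreach, hdist⟩ := pa_spec hu.2.1 (by omega)
        rw [hLt, mem_filter]
        exact ⟨mem_univ _, hreach, by omega⟩
      rw [show Lt1.card = ∑ x ∈ Lt, (Lt1.filter fun u => pa G v u = x).card from
        card_eq_sum_card_fiberwise hmap]
      have hfib : ∀ x ∈ Lt, (Lt1.filter fun u => pa G v u = x).card = d - 1 := by
        intro x hx
        rw [hLt, mem_filter] at hx
        obtain ⟨-, hxr, hxd⟩ := hx
        have : (Lt1.filter fun u => pa G v u = x)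
            = (G.neighborFinset x).filter fun u => G.dist v u = G.dist v x + 1 := by
          ext u
          simp only [hLt1, mem_filter, mem_univ, true_and, mem_neighborFinset]
          constructor
          · rintro ⟨⟨hur, hud⟩, hpa⟩
            obtain ⟨hadj, hreach, hdist⟩ := pa_spec hur (by omega)
            rw [hpa] at hadj
            exact ⟨hadj, by omega⟩
          · rintro ⟨hadj, hud⟩
            have hur : G.Reachable v u := hxr.trans hadj.reachable
            obtain ⟨hadj', hreach', hdist'⟩ := pa_spec hur (by omega)
            refine ⟨⟨hur, by omega⟩, ?_⟩
            exact parent_unique hegirth hadj' hadj hreach' hxr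
              (by omega) (by omega) (by omega)
        rw [this]
        exact children_card hegirth hreg hxr (by omega) (by omega)
      rw [Finset.sum_congr rfl hfib, Finset.sum_const, smul_eq_mul]
      rw [ih ht1 htS, show t + 1 - 1 = t from rfl]
      have hp : (d - 1) ^ t = (d - 1) ^ (t - 1) * (d - 1) := by
        rw [← pow_succ]
        congr 1
        omega
      rw [hp]
      ring

omit hegirth hreg in
lemma geom_nat (hd : 3 ≤ d) : ∀ n : ℕ,
    (d - 2) * (∑ t ∈ Finset.range n, (d - 1) ^ t) + 1 = (d - 1) ^ n := by
  obtain ⟨e, rfl⟩ : ∃ e, d = e + 3 := ⟨d - 3, by omega⟩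
  intro n
  induction n with
  | zero => simp
  | succ n ih =>
    rw [Finset.sum_range_succ, pow_succ, ← ih]
    have h2 : e + 3 - 2 = e + 1 := by omega
    have h1 : e + 3 - 1 = e + 2 := by omega
    rw [h1, h2] at *
    ring

lemma ball_card (hd : 3 ≤ d) :
    (d - 2) * (univ.filter fun u => G.Reachable v u ∧ G.dist v u ≤ S).card + 2
      = d * (d - 1) ^ S := by
  set B := univ.filter fun u => G.Reachable v u ∧ G.dist v u ≤ S with hB
  have hmap : ∀ u ∈ B, G.dist v u ∈ Finset.range (S + 1) := by
    intro u hu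
    rw [hB, mem_filter] at hu
    rw [Finset.mem_range]
    omega
  have hcard : B.card = ∑ t ∈ Finset.range (S + 1), (B.filter fun u => G.dist v u = t).card :=
    card_eq_sum_card_fiberwise hmap
  have hfib : ∀ t ∈ Finset.range (S + 1), (B.filter fun u => G.dist v u = t).card
      = (univ.filter fun u => G.Reachable v u ∧ G.dist v u = t).card := by
    intro t ht
    rw [Finset.mem_range] at ht
    congr 1
    ext u
    rw [hB]
    simp only [mem_filter, mem_univ, true_and]
    constructor
    · rintro ⟨⟨h1, h2⟩, h3⟩; exact ⟨h1, h3⟩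
    · rintro ⟨h1, h3⟩; exact ⟨⟨h1, by omega⟩, h3⟩
  rw [Finset.sum_congr rfl hfib] at hcard
  rw [Finset.sum_range_succ'] at hcard
  have h0 : (univ.filter fun u => G.Reachable v u ∧ G.dist v u = 0).card = 1 := by
    have : (univ.filter fun u => G.Reachable v u ∧ G.dist v u = 0) = {v} := by
      ext u
      simp only [mem_filter, mem_univ, true_and, Finset.mem_singleton]
      constructor
      · rintro ⟨h1, h2⟩
        exact (h1.dist_eq_zero_iff.mp h2).symm
      · rintro rfl
        exact ⟨Reachable.refl _, dist_self⟩
    rw [this, Finset.card_singleton]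
  have hlv : ∀ t ∈ Finset.range S,
      (univ.filter fun u => G.Reachable v u ∧ G.dist v u = t + 1).card = d * (d - 1) ^ t := by
    intro t ht
    rw [Finset.mem_range] at ht
    rw [level_card hegirth hreg hd (t + 1) (by omega) (by omega)]
    simp
  rw [Finset.sum_congr rfl hlv, h0] at hcard
  have hg := geom_nat (d := d) hd S
  rw [← Finset.mul_sum] at hcard
  set A := ∑ t ∈ Finset.range S, (d - 1) ^ t
  rw [hcard, ← hg]
  obtain ⟨e, rfl⟩ : ∃ e, d = e + 3 := ⟨d - 3, by omega⟩
  simp only [show e + 3 - 2 = e + 1 from by omega, show e + 3 - 1 = e + 2 from by omega]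
  ring

omit hegirth in
lemma prod_adj_card (U W : Finset V) :
    ((U ×ˢ W).filter fun p => G.Adj p.1 p.2).card
      = ∑ u ∈ U, (G.neighborFinset u ∩ W).card := by
  have hmap : ∀ p ∈ (U ×ˢ W).filter fun p => G.Adj p.1 p.2, p.1 ∈ U := by
    intro p hp
    rw [mem_filter, Finset.mem_product] at hp
    exact hp.1.1
  rw [card_eq_sum_card_fiberwise hmap]
  refine Finset.sum_congr rfl fun u hu => ?_
  have : (((U ×ˢ W).filter fun p => G.Adj p.1 p.2).filter fun p => p.1 = u)
      = {u} ×ˢ (G.neighborFinset u ∩ W) := by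
    ext ⟨a, b⟩
    simp only [mem_filter, Finset.mem_product, Finset.mem_singleton, Finset.mem_inter,
      mem_neighborFinset]
    constructor
    · rintro ⟨⟨⟨h1, h2⟩, h3⟩, rfl⟩
      exact ⟨rfl, h3, h2⟩
    · rintro ⟨rfl, h3, h2⟩
      exact ⟨⟨⟨hu, h2⟩, h3⟩, rfl⟩
  rw [this, Finset.card_product, Finset.card_singleton, one_mul]

omit hegirth in
lemma pair_count (U : Finset V) :
    d * U.card = ((U ×ˢ U).filter fun p => G.Adj p.1 p.2).card
      + ((U ×ˢ Uᶜ).filter fun p => G.Adj p.1 p.2).card := by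
  rw [prod_adj_card hreg, prod_adj_card hreg, ← Finset.sum_add_distrib]
  have : ∀ u ∈ U, (G.neighborFinset u ∩ U).card + (G.neighborFinset u ∩ Uᶜ).card = d := by
    intro u _
    have h1 : G.neighborFinset u ∩ Uᶜ = G.neighborFinset u \ U := by
      ext w
      simp [Finset.mem_sdiff, Finset.mem_compl]
    rw [h1, Finset.card_inter_add_card_sdiff]
    exact hreg u
  rw [Finset.sum_congr rfl this, Finset.sum_const, smul_eq_mul, mul_comm]

omit hegirth hreg in
lemma boundary_card (U : Finset V) :
    (G.edgeFinset.filter fun e => ∃ a b, e = s(a, b) ∧ a ∈ U ∧ b ∉ U).card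
      = ((U ×ˢ Uᶜ).filter fun p => G.Adj p.1 p.2).card := by
  symm
  apply Finset.card_bij (fun p _ => s(p.1, p.2))
  · rintro ⟨a, b⟩ hp
    rw [mem_filter, Finset.mem_product, Finset.mem_compl] at hp
    obtain ⟨⟨ha, hb⟩, hadj⟩ := hp
    rw [mem_filter, mem_edgeFinset]
    exact ⟨hadj, a, b, rfl, ha, hb⟩
  · rintro ⟨a, b⟩ hp ⟨a', b'⟩ hp' heq
    rw [mem_filter, Finset.mem_product, Finset.mem_compl] at hp hp'
    rw [Sym2.eq_iff] at heq
    rcases heq with ⟨rfl, rfl⟩ | ⟨rfl, rfl⟩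
    · rfl
    · exact absurd hp'.1.1 hp.1.2
  · intro e he
    rw [mem_filter] at he
    obtain ⟨hee, a, b, rfl, ha, hb⟩ := he
    refine ⟨(a, b), ?_, rfl⟩
    rw [mem_filter, Finset.mem_product, Finset.mem_compl]
    exact ⟨⟨ha, hb⟩, mem_edgeFinset.mp hee⟩

omit hreg in
lemma internal_split (U : Finset V) (hU : ∀ u ∈ U, G.Reachable v u ∧ G.dist v u ≤ S) :
    ((U ×ˢ U).filter fun p => G.Adj p.1 p.2).card
      = (((U ×ˢ U).filter fun p => G.Adj p.1 p.2).filter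
          fun p => G.dist v p.1 < G.dist v p.2).card
        + (((U ×ˢ U).filter fun p => G.Adj p.1 p.2).filter
          fun p => G.dist v p.2 < G.dist v p.1).card := by
  rw [← Finset.card_filter_add_card_filter_not
    (p := fun p => G.dist v p.1 < G.dist v p.2)]
  congr 1
  refine congrArg Finset.card ?_
  apply Finset.filter_congr
  intro p hp
  rw [mem_filter, Finset.mem_product] at hp
  obtain ⟨⟨h1, h2⟩, hadj⟩ := hp
  obtain ⟨hr1, hd1⟩ := hU _ h1
  obtain ⟨hr2, hd2⟩ := hU _ h2
  have hne : G.dist v p.1 ≠ G.dist v p.2 := fun h =>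
    no_same_level_edge hegirth hadj hr1 hr2 h hd1
  simp only [not_lt]
  constructor
  · intro h; omega
  · intro h; omega

omit hreg in
lemma up_inj (U : Finset V) (hU : ∀ u ∈ U, G.Reachable v u ∧ G.dist v u ≤ S) :
    ∀ p ∈ ((U ×ˢ U).filter fun p => G.Adj p.1 p.2).filter
        (fun p => G.dist v p.1 < G.dist v p.2),
      ∀ q ∈ ((U ×ˢ U).filter fun p => G.Adj p.1 p.2).filter
        (fun p => G.dist v p.1 < G.dist v p.2), p.2 = q.2 → p = q := by
  rintro ⟨a, b⟩ hp ⟨a', b'⟩ hq heq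
  simp only at heq
  subst heq
  simp only [mem_filter, Finset.mem_product] at hp hq
  obtain ⟨⟨⟨ha, hb⟩, hadj⟩, hlt⟩ := hp
  obtain ⟨⟨⟨ha', -⟩, hadj'⟩, hlt'⟩ := hq
  obtain ⟨hra, hda⟩ := hU _ ha
  obtain ⟨hra', hda'⟩ := hU _ ha'
  obtain ⟨hrb, hdb⟩ := hU _ hb
  have h1 : G.dist v b ≤ G.dist v a + 1 := dist_le_dist_add_one hadj hra
  have h1' : G.dist v b ≤ G.dist v a' + 1 := dist_le_dist_add_one hadj' hra'
  have : a = a' := parent_unique hegirth hadj hadj' hra hra' (by omega) (by omega) hdb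
  rw [this]

omit hreg in
lemma internal_le (U : Finset V) (hU : ∀ u ∈ U, G.Reachable v u ∧ G.dist v u ≤ S)
    (hne : U.Nonempty) :
    ((U ×ˢ U).filter fun p => G.Adj p.1 p.2).card + 2 ≤ 2 * U.card := by
  obtain ⟨m, hm, hmin⟩ := U.exists_min_image (fun u => G.dist v u) hne
  rw [internal_split hegirth U hU]
  have hb1 : (((U ×ˢ U).filter fun p => G.Adj p.1 p.2).filter
      fun p => G.dist v p.1 < G.dist v p.2).card ≤ (U.erase m).card := by
    apply Finset.card_le_card_of_injOn Prod.snd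
    · rintro ⟨a, b⟩ hp
      simp only [mem_filter, Finset.mem_product, Finset.mem_coe] at hp
      obtain ⟨⟨⟨ha, hb⟩, hadj⟩, hlt⟩ := hp
      rw [Finset.mem_coe, Finset.mem_erase]
      exact ⟨fun h => by have hlt' : G.dist v a < G.dist v b := hlt; have h2 : G.dist v m ≤ G.dist v a := hmin a ha; have h3 : b = m := h; subst h3; omega, hb⟩
    · intro p hp q hq heq
      exact up_inj hegirth U hU p (by simpa using hp) q (by simpa using hq) heq
  have hb2 : (((U ×ˢ U).filter fun p => G.Adj p.1 p.2).filter
      fun p => G.dist v p.2 < G.dist v p.1).card ≤ (U.erase m).card := by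
    have hswap : (((U ×ˢ U).filter fun p => G.Adj p.1 p.2).filter
        fun p => G.dist v p.2 < G.dist v p.1).card
        = (((U ×ˢ U).filter fun p => G.Adj p.1 p.2).filter
        fun p => G.dist v p.1 < G.dist v p.2).card := by
      apply Finset.card_bij (fun p _ => (p.2, p.1))
      · rintro ⟨a, b⟩ hp
        simp only [mem_filter, Finset.mem_product] at hp ⊢
        exact ⟨⟨⟨hp.1.1.2, hp.1.1.1⟩, hp.1.2.symm⟩, hp.2⟩
      · rintro ⟨a, b⟩ - ⟨a', b'⟩ - heq
        simp only [Prod.mk.injEq] at heq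
        exact Prod.ext heq.2 heq.1
      · rintro ⟨a, b⟩ hp
        refine ⟨(b, a), ?_, rfl⟩
        simp only [mem_filter, Finset.mem_product] at hp ⊢
        exact ⟨⟨⟨hp.1.1.2, hp.1.1.1⟩, hp.1.2.symm⟩, hp.2⟩
    rw [hswap]
    exact hb1
  have hcm : (U.erase m).card = U.card - 1 := Finset.card_erase_of_mem hm
  have hU1 : 1 ≤ U.card := Finset.card_pos.mpr hne
  omega

omit hreg in
lemma internal_ball :
    ((((univ.filter fun u => G.Reachable v u ∧ G.dist v u ≤ S)
        ×ˢ (univ.filter fun u => G.Reachable v u ∧ G.dist v u ≤ S)).filter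
        fun p => G.Adj p.1 p.2).card) + 2
      = 2 * (univ.filter fun u => G.Reachable v u ∧ G.dist v u ≤ S).card := by
  set B := univ.filter fun u => G.Reachable v u ∧ G.dist v u ≤ S with hBdef
  have hU : ∀ u ∈ B, G.Reachable v u ∧ G.dist v u ≤ S := by
    intro u hu
    rw [hBdef, mem_filter] at hu
    exact hu.2
  have hvB : v ∈ B := by
    rw [hBdef, mem_filter]
    exact ⟨mem_univ _, Reachable.refl _, by rw [SimpleGraph.dist_self]; omega⟩
  rw [internal_split hegirth B hU]
  have hup : ((B ×ˢ B).filter fun p => G.Adj p.1 p.2).filter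
      (fun p => G.dist v p.1 < G.dist v p.2) = (B ×ˢ B).filter
      (fun p => G.Adj p.1 p.2 ∧ G.dist v p.1 < G.dist v p.2) := by
    rw [Finset.filter_filter]
  have hb1 : (((B ×ˢ B).filter fun p => G.Adj p.1 p.2).filter
      fun p => G.dist v p.1 < G.dist v p.2).card = (B.erase v).card := by
    apply Finset.card_bij (fun p _ => p.2)
    · rintro ⟨a, b⟩ hp
      simp only [mem_filter, Finset.mem_product] at hp
      obtain ⟨⟨⟨ha, hb⟩, hadj⟩, hlt⟩ := hp
      rw [Finset.mem_erase]
      refine ⟨fun h => ?_, hb⟩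
      have hlt' : G.dist v a < G.dist v b := hlt
      subst h
      rw [dist_self] at hlt'
      omega
    · intro p hp q hq heq
      exact up_inj hegirth B hU p hp q hq heq
    · intro u hu
      rw [Finset.mem_erase] at hu
      obtain ⟨hune, huB⟩ := hu
      obtain ⟨hur, hud⟩ := hU _ huB
      have hpos : 0 < G.dist v u := hur.pos_dist_of_ne (Ne.symm hune)
      obtain ⟨hadj, hreach, hdist⟩ := pa_spec hur hpos
      refine ⟨(pa G v u, u), ?_, rfl⟩
      simp only [mem_filter, Finset.mem_product]
      refine ⟨⟨⟨?_, huB⟩, hadj⟩, by omega⟩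
      rw [hBdef, mem_filter]
      exact ⟨mem_univ _, hreach, by omega⟩
  have hswap : (((B ×ˢ B).filter fun p => G.Adj p.1 p.2).filter
      fun p => G.dist v p.2 < G.dist v p.1).card
      = (((B ×ˢ B).filter fun p => G.Adj p.1 p.2).filter
      fun p => G.dist v p.1 < G.dist v p.2).card := by
    apply Finset.card_bij (fun p _ => (p.2, p.1))
    · rintro ⟨a, b⟩ hp
      simp only [mem_filter, Finset.mem_product] at hp ⊢
      exact ⟨⟨⟨hp.1.1.2, hp.1.1.1⟩, hp.1.2.symm⟩, hp.2⟩
    · rintro ⟨a, b⟩ - ⟨a', b'⟩ - heq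
      simp only [Prod.mk.injEq] at heq
      exact Prod.ext heq.2 heq.1
    · rintro ⟨a, b⟩ hp
      refine ⟨(b, a), ?_, rfl⟩
      simp only [mem_filter, Finset.mem_product] at hp ⊢
      exact ⟨⟨⟨hp.1.1.2, hp.1.1.1⟩, hp.1.2.symm⟩, hp.2⟩
  have hcm : (B.erase v).card = B.card - 1 := Finset.card_erase_of_mem hvB
  have hB1 : 1 ≤ B.card := Finset.card_pos.mpr ⟨v, hvB⟩
  omega

end Count
end SimpleGraph


open SimpleGraph Finset

/-- For a `d`-regular graph (`d ≥ 3`) of girth `c` and `S` with `2S+1 < c`: every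
nonempty `U` contained in a ball `B(v,S)` satisfies
`|∂U|/|U| ≥ d − 2 + 2(2−d)/(2 − d(d−1)^S)`, and the ball `B(v,S)` itself realizes the
value `(d−2)·d·(d−1)^S/(d(d−1)^S − 2)`, so the Cheeger constant of `G` at scale `S`
equals `(d−2)·d·(d−1)^S/(d(d−1)^S − 2)`. -/
theorem stmt14 {V : Type*} [Fintype V] [DecidableEq V]
    (G : SimpleGraph V) [DecidableRel G.Adj]
    (d S : ℕ) (hd : 3 ≤ d) (hreg : G.IsRegularOfDegree d)
    (hgirth : ((2 * S + 1 : ℕ) : ℕ∞) < G.girth) :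
    (∀ (v : V) (U : Finset V), U.Nonempty →
      (∀ u ∈ U, G.Reachable v u ∧ G.dist v u ≤ S) →
      (d : ℝ) - 2 + 2 * (2 - (d : ℝ)) / (2 - d * ((d : ℝ) - 1) ^ S)
        ≤ ((G.edgeFinset.filter fun e => ∃ a b, e = s(a, b) ∧ a ∈ U ∧ b ∉ U).card : ℝ)
            / (U.card : ℝ))
    ∧ ∀ v : V,
      ((G.edgeFinset.filter fun e => ∃ a b, e = s(a, b)
          ∧ (G.Reachable v a ∧ G.dist v a ≤ S) ∧ ¬(G.Reachable v b ∧ G.dist v b ≤ S)).card : ℝ)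
        / ((Finset.univ.filter fun u => G.Reachable v u ∧ G.dist v u ≤ S).card : ℝ)
      = ((d : ℝ) - 2) * d * ((d : ℝ) - 1) ^ S / ((d : ℝ) * ((d : ℝ) - 1) ^ S - 2) := by
  have hegirth : (2 * (S : ℕ∞) + 1 : ℕ∞) < G.egirth := by
    have h1 : (G.girth : ℕ∞) ≤ G.egirth := ENat.coe_toNat_le_self _
    have h2 : ((2 * S + 1 : ℕ) : ℕ∞) = 2 * (S : ℕ∞) + 1 := by push_cast; ring
    calc (2 * (S : ℕ∞) + 1 : ℕ∞) = ((2 * S + 1 : ℕ) : ℕ∞) := h2.symm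
      _ < (G.girth : ℕ∞) := hgirth
      _ ≤ G.egirth := h1
  -- real abbreviations
  set D : ℝ := ((d : ℝ) - 1) ^ S with hD
  have hd3 : (3 : ℝ) ≤ (d : ℝ) := by exact_mod_cast hd
  have hD1 : (1 : ℝ) ≤ D := one_le_pow₀ (by linarith)
  have hdD : (3 : ℝ) ≤ (d : ℝ) * D := by nlinarith
  -- ball facts for each v
  have hBfact : ∀ v : V,
      ((d : ℝ) - 2) * ((Finset.univ.filter fun u =>
        G.Reachable v u ∧ G.dist v u ≤ S).card : ℝ) + 2 = (d : ℝ) * D := by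
    intro v
    have hn := ball_card (v := v) hegirth hreg hd
    have h2 : ((d - 2 : ℕ) : ℝ) = (d : ℝ) - 2 := by
      exact_mod_cast Nat.cast_sub (show (2:ℕ) ≤ d by omega)
    have h1 : ((d - 1 : ℕ) : ℝ) = (d : ℝ) - 1 := by
      exact_mod_cast Nat.cast_sub (show (1:ℕ) ≤ d by omega)
    have hc : ((d - 2 : ℕ) : ℝ) * ((Finset.univ.filter fun u =>
        G.Reachable v u ∧ G.dist v u ≤ S).card : ℝ) + 2
        = (d : ℝ) * ((d - 1 : ℕ) : ℝ) ^ S := by exact_mod_cast hn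
    rw [h2, h1] at hc
    exact hc
  have hBpos : ∀ v : V, (1 : ℝ) ≤ ((Finset.univ.filter fun u =>
      G.Reachable v u ∧ G.dist v u ≤ S).card : ℝ) := by
    intro v
    have hv : v ∈ Finset.univ.filter fun u => G.Reachable v u ∧ G.dist v u ≤ S := by
      rw [Finset.mem_filter]
      exact ⟨Finset.mem_univ _, Reachable.refl _, by rw [SimpleGraph.dist_self]; omega⟩
    have : 1 ≤ (Finset.univ.filter fun u =>
        G.Reachable v u ∧ G.dist v u ≤ S).card := Finset.card_pos.mpr ⟨v, hv⟩
    exact_mod_cast this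
  constructor
  · -- part 1
    intro v U hUne hU
    set Bc : ℝ := ((Finset.univ.filter fun u =>
      G.Reachable v u ∧ G.dist v u ≤ S).card : ℝ) with hBc
    have hUB : U ⊆ Finset.univ.filter fun u => G.Reachable v u ∧ G.dist v u ≤ S := by
      intro u hu
      rw [Finset.mem_filter]
      exact ⟨Finset.mem_univ _, hU u hu⟩
    have huc : (1 : ℝ) ≤ (U.card : ℝ) := by
      have : 1 ≤ U.card := Finset.card_pos.mpr hUne
      exact_mod_cast this
    have hucB : (U.card : ℝ) ≤ Bc := by
      rw [hBc]
      exact_mod_cast Finset.card_le_card hUB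
    -- counting
    rw [boundary_card U]
    have r1 : (d : ℝ) * U.card = (((U ×ˢ Uᶜ).filter fun p => G.Adj p.1 p.2).card : ℝ)
        + (((U ×ˢ U).filter fun p => G.Adj p.1 p.2).card : ℝ) := by
      have := pair_count hreg U
      exact_mod_cast (by rw [this]; ring : (d * U.card : ℕ)
        = ((U ×ˢ Uᶜ).filter fun p => G.Adj p.1 p.2).card
          + ((U ×ˢ U).filter fun p => G.Adj p.1 p.2).card)
    have r2 : (((U ×ˢ U).filter fun p => G.Adj p.1 p.2).card : ℝ) + 2 ≤ 2 * U.card := by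
      exact_mod_cast internal_le hegirth U hU hUne
    set bp : ℝ := (((U ×ˢ Uᶜ).filter fun p => G.Adj p.1 p.2).card : ℝ)
    have hbp : ((d : ℝ) - 2) * U.card + 2 ≤ bp := by nlinarith
    have hBfv := hBfact v
    rw [← hBc] at hBfv
    have hucpos : (0 : ℝ) < (U.card : ℝ) := by linarith
    have hBcpos : (0 : ℝ) < Bc := by linarith
    have key1 : 2 * (2 - (d : ℝ)) / (2 - d * D) = 2 / Bc := by
      rw [div_eq_div_iff (show (2 - (d:ℝ) * D) ≠ 0 by nlinarith) hBcpos.ne']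
      linear_combination (-2 : ℝ) * hBfv
    have key2 : 2 / Bc ≤ 2 / (U.card : ℝ) := by
      gcongr
    have key3 : ((d : ℝ) - 2) + 2 / (U.card : ℝ) ≤ bp / (U.card : ℝ) := by
      rw [le_div_iff₀ hucpos]
      have : (((d : ℝ) - 2) + 2 / (U.card : ℝ)) * U.card = ((d : ℝ) - 2) * U.card + 2 := by
        field_simp
      rw [this]
      exact hbp
    calc (d : ℝ) - 2 + 2 * (2 - (d : ℝ)) / (2 - d * D)
        = ((d : ℝ) - 2) + 2 / Bc := by rw [key1]
      _ ≤ ((d : ℝ) - 2) + 2 / (U.card : ℝ) := by linarith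
      _ ≤ bp / (U.card : ℝ) := key3
  · -- part 2
    intro v
    set B : Finset V := Finset.univ.filter fun u => G.Reachable v u ∧ G.dist v u ≤ S with hB
    have hBmem : ∀ x, (G.Reachable v x ∧ G.dist v x ≤ S) ↔ x ∈ B := by
      intro x
      rw [hB, Finset.mem_filter]
      simp
    have hnum : (G.edgeFinset.filter fun e => ∃ a b, e = s(a, b)
          ∧ (G.Reachable v a ∧ G.dist v a ≤ S) ∧ ¬(G.Reachable v b ∧ G.dist v b ≤ S))
        = G.edgeFinset.filter fun e => ∃ a b, e = s(a, b) ∧ a ∈ B ∧ b ∉ B := by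
      apply Finset.filter_congr
      intro e he
      simp only [hBmem]
    rw [hnum, boundary_card B]
    have hBfv := hBfact v
    rw [← hB] at hBfv
    have hBcpos : (0 : ℝ) < (B.card : ℝ) := by
      have := hBpos v
      rw [← hB] at this
      linarith
    have r1 : (d : ℝ) * B.card = (((B ×ˢ Bᶜ).filter fun p => G.Adj p.1 p.2).card : ℝ)
        + (((B ×ˢ B).filter fun p => G.Adj p.1 p.2).card : ℝ) := by
      have := pair_count hreg B
      exact_mod_cast (by rw [this]; ring : (d * B.card : ℕ)
        = ((B ×ˢ Bᶜ).filter fun p => G.Adj p.1 p.2).card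
          + ((B ×ˢ B).filter fun p => G.Adj p.1 p.2).card)
    have r2 : (((B ×ˢ B).filter fun p => G.Adj p.1 p.2).card : ℝ) + 2 = 2 * B.card := by
      have := internal_ball (S := S) (v := v) hegirth
      rw [← hB] at this
      exact_mod_cast this
    set bp : ℝ := (((B ×ˢ Bᶜ).filter fun p => G.Adj p.1 p.2).card : ℝ)
    have e1 : bp = (d : ℝ) * D := by linarith
    rw [div_eq_div_iff hBcpos.ne' (show ((d : ℝ) * D - 2) ≠ 0 by nlinarith)]
    linear_combination ((d : ℝ) * D - 2) * e1 - (d : ℝ) * D * hBfv
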